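/- Let s ≥ 2 and 2 ≤ j ≤ s be integers and let γ ∈ ℝ. Define q : ℝ → ℝ by q(t) = E_j(t, t, …, t, γ − (s−1)t), where the first s − 1 arguments equal t, so that the arguments sum to γ. Then q is a polynomial function of t of degree exactly j; in particular its leading coefficient C(s−1, j) − (s−1)·C(s−1, j−1) is nonzero. -/

import Mathlib

/-- The `j`-th elementary symmetric polynomial of `x : Fin s → ℝ`
(`E 0 = 1`, `E j = 0` for `j > s`). -/
noncomputable def esymm (s j : ℕ) (x : Fin s → ℝ) : ℝ :=
  ∑ t ∈ Finset.powersetCard j (Finset.univ : Finset (Fin s)), ∏ i ∈ t, x i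

/-- For `2 ≤ j ≤ s`, the function `q(t) = E_j(t, …, t, γ − (s−1)t)` (with the
first `s − 1` arguments equal to `t`) is a polynomial of degree exactly `j`,
with nonzero leading coefficient `C(s−1, j) − (s−1)·C(s−1, j−1)`. -/
theorem esymm_on_line_degree (s j : ℕ) (hs : 2 ≤ s) (hj2 : 2 ≤ j) (hjs : j ≤ s)
    (γ : ℝ) (q : ℝ → ℝ)
    (hq : ∀ t : ℝ, q t =
      esymm s j (fun i => if (i : ℕ) < s - 1 then t else γ - ((s : ℝ) - 1) * t)) :
    ∃ P : Polynomial ℝ,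
      (∀ t : ℝ, q t = P.eval t) ∧
      P.degree = j ∧
      P.leadingCoeff =
        ((s - 1).choose j : ℝ) - ((s : ℝ) - 1) * ((s - 1).choose (j - 1) : ℝ) ∧
      ((s - 1).choose j : ℝ) - ((s : ℝ) - 1) * ((s - 1).choose (j - 1) : ℝ) ≠ 0 := by
  have hs1 : s - 1 < s := by omega
  set e : Fin s := ⟨s - 1, hs1⟩ with he
  set a : ℝ := ((s - 1).choose j : ℝ) with ha
  set b : ℝ := ((s - 1).choose (j - 1) : ℝ) with hb
  set c : ℝ := a - ((s : ℝ) - 1) * b with hc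
  -- relation a * j = b * (s - j)
  have hrelN : (s - 1).choose j * j = (s - 1).choose (j - 1) * (s - j) := by
    have h := Nat.choose_succ_right_eq (s - 1) (j - 1)
    have h1 : j - 1 + 1 = j := by omega
    have h2 : s - 1 - (j - 1) = s - j := by omega
    rw [h1, h2] at h
    exact h
  have hrel : a * (j : ℝ) = b * ((s : ℝ) - (j : ℝ)) := by
    have := congrArg (fun n : ℕ => (n : ℝ)) hrelN
    push_cast [Nat.sub_le s j] at this
    rw [Nat.cast_sub hjs] at this
    push_cast at this
    rw [ha, hb]
    linarith
  have hbpos : (0 : ℝ) < b := by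
    rw [hb]
    exact_mod_cast Nat.choose_pos (by omega : j - 1 ≤ s - 1)
  have hjR : (2 : ℝ) ≤ (j : ℝ) := by exact_mod_cast hj2
  have hsR : (2 : ℝ) ≤ (s : ℝ) := by exact_mod_cast hs
  have hcneg : c < 0 := by
    -- c * j = a*j - (s-1)*b*j = b*(s-j) - (s-1)*b*j = b*s*(1-j) < 0
    nlinarith [mul_pos hbpos (by linarith : (0:ℝ) < (s:ℝ)),
      mul_pos (mul_pos hbpos (by linarith : (0:ℝ) < (s:ℝ))) (by linarith : (0:ℝ) < (j:ℝ) - 1)]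
  have hcne : c ≠ 0 := ne_of_lt hcneg
  -- the key evaluation
  have hkey : ∀ t : ℝ, q t = c * t ^ j + b * γ * t ^ (j - 1) := by
    intro t
    rw [hq]
    unfold esymm
    set f : Fin s → ℝ := fun i => if (i : ℕ) < s - 1 then t else γ - ((s : ℝ) - 1) * t with hf
    rw [← Finset.sum_filter_add_sum_filter_not (Finset.powersetCard j Finset.univ)
      (fun A => e ∈ A)]
    have hfe : f e = γ - ((s : ℝ) - 1) * t := by simp [hf, he]
    have hft : ∀ i : Fin s, i ≠ e → f i = t := by
      intro i hi
      have : (i : ℕ) < s - 1 := by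
        have := i.isLt
        have hne : (i : ℕ) ≠ s - 1 := fun h => hi (Fin.ext h)
        omega
      simp [hf, this]
    -- the second filter is the powersetCard of univ.erase e
    have hF2 : Finset.filter (fun A => ¬ e ∈ A) (Finset.powersetCard j (Finset.univ : Finset (Fin s)))
        = Finset.powersetCard j (Finset.univ.erase e) := by
      ext A
      simp only [Finset.mem_filter, Finset.mem_powersetCard, Finset.subset_erase]
      constructor
      · rintro ⟨⟨h1, h2⟩, h3⟩; exact ⟨⟨h1, h3⟩, h2⟩
      · rintro ⟨⟨h1, h3⟩, h2⟩; exact ⟨⟨h1, h2⟩, h3⟩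
    have hcarderase : (Finset.univ.erase e).card = s - 1 := by
      rw [Finset.card_erase_of_mem (Finset.mem_univ e), Finset.card_univ, Fintype.card_fin]
    have hcardF2 : (Finset.filter (fun A => ¬ e ∈ A)
        (Finset.powersetCard j (Finset.univ : Finset (Fin s)))).card = (s - 1).choose j := by
      rw [hF2, Finset.card_powersetCard, hcarderase]
    have hcardF1 : (Finset.filter (fun A => e ∈ A)
        (Finset.powersetCard j (Finset.univ : Finset (Fin s)))).card = (s - 1).choose (j - 1) := by
      have htot := Finset.card_filter_add_card_filter_not (p := fun A => e ∈ A)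
        (s := Finset.powersetCard j (Finset.univ : Finset (Fin s)))
      rw [hcardF2, Finset.card_powersetCard, Finset.card_univ, Fintype.card_fin] at htot
      have hpascal : s.choose j = (s - 1).choose (j - 1) + (s - 1).choose j := by
        have := Nat.choose_succ_succ (s - 1) (j - 1)
        simp only [Nat.succ_eq_add_one] at this
        have h1 : s - 1 + 1 = s := by omega
        have h2 : j - 1 + 1 = j := by omega
        rw [h1, h2] at this
        exact this
      omega
    -- sum over sets containing e
    have hsum1 : ∑ A ∈ Finset.filter (fun A => e ∈ A)
        (Finset.powersetCard j (Finset.univ : Finset (Fin s))), ∏ i ∈ A, f i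
        = b * ((γ - ((s : ℝ) - 1) * t) * t ^ (j - 1)) := by
      rw [Finset.sum_congr rfl (fun A hA => ?_), Finset.sum_const, hcardF1, nsmul_eq_mul, hb]
      simp only [Finset.mem_filter, Finset.mem_powersetCard] at hA
      obtain ⟨⟨hsub, hcard⟩, heA⟩ := hA
      rw [← Finset.prod_erase_mul A f heA, hfe]
      have hprod : ∏ i ∈ A.erase e, f i = t ^ (j - 1) := by
        rw [Finset.prod_congr rfl (fun i hi => hft i (Finset.ne_of_mem_erase hi)),
          Finset.prod_const, Finset.card_erase_of_mem heA, hcard]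
      rw [hprod]; ring
    -- sum over sets not containing e
    have hsum2 : ∑ A ∈ Finset.filter (fun A => ¬ e ∈ A)
        (Finset.powersetCard j (Finset.univ : Finset (Fin s))), ∏ i ∈ A, f i
        = a * t ^ j := by
      rw [Finset.sum_congr rfl (fun A hA => ?_), Finset.sum_const, hcardF2, nsmul_eq_mul, ha]
      simp only [Finset.mem_filter, Finset.mem_powersetCard] at hA
      obtain ⟨⟨hsub, hcard⟩, heA⟩ := hA
      rw [Finset.prod_congr rfl (fun i hi => hft i (fun h => heA (h ▸ hi))),
        Finset.prod_const, hcard]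
    rw [hsum1, hsum2]
    have hpow : t ^ j = t ^ (j - 1) * t := by
      rw [← pow_succ]
      congr 1
      omega
    rw [hc, hpow]; ring
  -- the polynomial
  refine ⟨Polynomial.C c * Polynomial.X ^ j + Polynomial.C (b * γ) * Polynomial.X ^ (j - 1),
    ?_, ?_, ?_, hcne⟩
  · intro t; rw [hkey t]; simp
  · have hd1 : (Polynomial.C c * Polynomial.X ^ j : Polynomial ℝ).degree = j := by
      rw [Polynomial.degree_C_mul_X_pow j hcne]
    have hd2 : (Polynomial.C (b * γ) * Polynomial.X ^ (j - 1) : Polynomial ℝ).degree < j := by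
      apply lt_of_le_of_lt (Polynomial.degree_C_mul_X_pow_le _ _)
      exact_mod_cast (by omega : j - 1 < j)
    rw [Polynomial.degree_add_eq_left_of_degree_lt (by rw [hd1]; exact hd2), hd1]
  · have hd1 : (Polynomial.C c * Polynomial.X ^ j : Polynomial ℝ).degree = j := by
      rw [Polynomial.degree_C_mul_X_pow j hcne]
    have hd2 : (Polynomial.C (b * γ) * Polynomial.X ^ (j - 1) : Polynomial ℝ).degree < j := by
      apply lt_of_le_of_lt (Polynomial.degree_C_mul_X_pow_le _ _)
      exact_mod_cast (by omega : j - 1 < j)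
    have hdeg : (Polynomial.C c * Polynomial.X ^ j
        + Polynomial.C (b * γ) * Polynomial.X ^ (j - 1) : Polynomial ℝ).degree = j := by
      rw [Polynomial.degree_add_eq_left_of_degree_lt (by rw [hd1]; exact hd2), hd1]
    have hnatdeg : (Polynomial.C c * Polynomial.X ^ j
        + Polynomial.C (b * γ) * Polynomial.X ^ (j - 1) : Polynomial ℝ).natDegree = j :=
      Polynomial.natDegree_eq_of_degree_eq_some hdeg
    rw [Polynomial.leadingCoeff, hnatdeg]
    rw [Polynomial.coeff_add, Polynomial.coeff_C_mul, Polynomial.coeff_C_mul,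
      Polynomial.coeff_X_pow, Polynomial.coeff_X_pow]
    simp only [if_pos rfl, mul_one, if_neg (by omega : ¬ j = j - 1), mul_zero, add_zero, hc]
    simp
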